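/- The third-order differential syzygy holds: (∇₂(I_{2b}) + ∇₁(I_{2c}))·I₁ − (3I_{2a} − I₁)·I_{2c} + 3I_{2b}² = 0 identically on the jet space, where ∇₁ = x D_x + y D_y, ∇₂ = u_x D_y − u_y D_x, I₁ = x u_x + y u_y, I_{2a} = x²u_{xx} + 2xy u_{xy} + y²u_{yy}, I_{2b} = x u_y u_{xx} − y u_x u_{yy} + (y u_y − x u_x)u_{xy}, I_{2c} = u_x²u_{yy} − 2u_x u_y u_{xy} + u_y²u_{xx}. -/

import Mathlib

open Matrix

noncomputable section

/-- Coordinates on `J³ℝ²`: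
`(x, y, u, u_x, u_y, u_xx, u_xy, u_yy, u_xxx, u_xxy, u_xyy, u_yyy)`. -/
def Dx (F : (Fin 12 → ℝ) → ℝ) : (Fin 12 → ℝ) → ℝ := fun p =>
  fderiv ℝ F p ![1, 0, p 3, p 5, p 6, p 8, p 9, p 10, 0, 0, 0, 0]

def Dy (F : (Fin 12 → ℝ) → ℝ) : (Fin 12 → ℝ) → ℝ := fun p =>
  fderiv ℝ F p ![0, 1, p 4, p 6, p 7, p 9, p 10, p 11, 0, 0, 0, 0]

/-- `∇₁ = x D_x + y D_y`. -/
def Nabla1 (F : (Fin 12 → ℝ) → ℝ) : (Fin 12 → ℝ) → ℝ := fun p =>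
  p 0 * Dx F p + p 1 * Dy F p

/-- `∇₂ = u_x D_y − u_y D_x`. -/
def Nabla2 (F : (Fin 12 → ℝ) → ℝ) : (Fin 12 → ℝ) → ℝ := fun p =>
  p 3 * Dy F p - p 4 * Dx F p

def I1 : (Fin 12 → ℝ) → ℝ := fun p => p 0 * p 3 + p 1 * p 4

def I2a : (Fin 12 → ℝ) → ℝ := fun p =>
  (p 0) ^ 2 * p 5 + 2 * p 0 * p 1 * p 6 + (p 1) ^ 2 * p 7

def I2b : (Fin 12 → ℝ) → ℝ := fun p =>
  p 0 * p 4 * p 5 - p 1 * p 3 * p 7 + (p 1 * p 4 - p 0 * p 3) * p 6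

def I2c : (Fin 12 → ℝ) → ℝ := fun p =>
  (p 3) ^ 2 * p 7 - 2 * p 3 * p 4 * p 6 + (p 4) ^ 2 * p 5

lemma vec12_0 (a b c d e f g h i j k l : ℝ) :
    (![a,b,c,d,e,f,g,h,i,j,k,l] : Fin 12 → ℝ) 0 = a := rfl
lemma vec12_1 (a b c d e f g h i j k l : ℝ) :
    (![a,b,c,d,e,f,g,h,i,j,k,l] : Fin 12 → ℝ) 1 = b := rfl
lemma vec12_2 (a b c d e f g h i j k l : ℝ) :
    (![a,b,c,d,e,f,g,h,i,j,k,l] : Fin 12 → ℝ) 2 = c := rfl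
lemma vec12_3 (a b c d e f g h i j k l : ℝ) :
    (![a,b,c,d,e,f,g,h,i,j,k,l] : Fin 12 → ℝ) 3 = d := rfl
lemma vec12_4 (a b c d e f g h i j k l : ℝ) :
    (![a,b,c,d,e,f,g,h,i,j,k,l] : Fin 12 → ℝ) 4 = e := rfl
lemma vec12_5 (a b c d e f g h i j k l : ℝ) :
    (![a,b,c,d,e,f,g,h,i,j,k,l] : Fin 12 → ℝ) 5 = f := rfl
lemma vec12_6 (a b c d e f g h i j k l : ℝ) :
    (![a,b,c,d,e,f,g,h,i,j,k,l] : Fin 12 → ℝ) 6 = g := rfl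
lemma vec12_7 (a b c d e f g h i j k l : ℝ) :
    (![a,b,c,d,e,f,g,h,i,j,k,l] : Fin 12 → ℝ) 7 = h := rfl

/-- The third-order differential syzygy
`(∇₂(I_{2b}) + ∇₁(I_{2c}))·I₁ − (3I_{2a} − I₁)·I_{2c} + 3I_{2b}² = 0`. -/
theorem stmt_5 : ∀ p : Fin 12 → ℝ,
    (Nabla2 I2b p + Nabla1 I2c p) * I1 p - (3 * I2a p - I1 p) * I2c p + 3 * (I2b p) ^ 2 = 0 := by
  intro p
  have pr : ∀ i : Fin 12, HasFDerivAt (fun q : Fin 12 → ℝ => q i)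
      ((ContinuousLinearMap.proj i : (Fin 12 → ℝ) →L[ℝ] ℝ)) p := fun i =>
    ContinuousLinearMap.hasFDerivAt (ContinuousLinearMap.proj i : (Fin 12 → ℝ) →L[ℝ] ℝ)
  have h2b : HasFDerivAt I2b _ p :=
    ((((pr 0).mul (pr 4)).mul (pr 5)).sub (((pr 1).mul (pr 3)).mul (pr 7))).add
      ((((pr 1).mul (pr 4)).sub ((pr 0).mul (pr 3))).mul (pr 6))
  have h2c : HasFDerivAt I2c _ p :=
    ((((hasDerivAt_pow 2 (p 3)).comp_hasFDerivAt (h₂ := fun x : ℝ => x ^ 2) p (pr 3)).mul (pr 7)).sub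
        ((((hasFDerivAt_const (2:ℝ) p).mul (pr 3)).mul (pr 4)).mul (pr 6))).add
      (((hasDerivAt_pow 2 (p 4)).comp_hasFDerivAt (h₂ := fun x : ℝ => x ^ 2) p (pr 4)).mul (pr 5))
  simp only [Nabla1, Nabla2, Dx, Dy, h2b.fderiv, h2c.fderiv, I1, I2a, I2b, I2c,
    ContinuousLinearMap.add_apply, ContinuousLinearMap.sub_apply,
    ContinuousLinearMap.smul_apply, ContinuousLinearMap.coe_smul', Pi.smul_apply,
    ContinuousLinearMap.proj_apply, smul_eq_mul, ContinuousLinearMap.zero_apply,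
    Matrix.cons_val_zero, Matrix.cons_val_one, Matrix.head_cons, Matrix.cons_val_fin_one,
    vec12_0, vec12_1, vec12_2, vec12_3, vec12_4, vec12_5, vec12_6, vec12_7, Fin.isValue, Function.comp, Pi.mul_apply, Pi.sub_apply, Nat.cast_ofNat, pow_one, mul_zero, mul_one, zero_mul]
  ring
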